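/- Let α = δ_0, δ_1, …, δ_m = β and γ be vectors in k² such that [γ, δ_i] ≠ 0 for all i. Then [α, β] = Σ_{i=0}^{m−1} [γ, α][γ, β][δ_i, δ_{i+1}] / ([γ, δ_i][γ, δ_{i+1}]). -/

import Mathlib

open Finset

/-- Telescoping sum over `Fin`. -/
lemma fin_sum_telescope {M : Type*} [AddCommGroup M] :
    ∀ (m : ℕ) (g : Fin (m + 1) → M),
      ∑ i : Fin m, (g i.succ - g i.castSucc) = g (Fin.last m) - g 0 := by
  intro m
  induction m with
  | zero => simp
  | succ n ih =>
    intro g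
    rw [Fin.sum_univ_castSucc]
    have h := ih (fun i => g i.castSucc)
    have e : ∀ i : Fin n, (i.succ : Fin (n+1)).castSucc = (i.castSucc : Fin (n+1)).succ := by
      intro i; simp [Fin.ext_iff]
    calc ∑ i : Fin n, (g i.castSucc.succ - g i.castSucc.castSucc)
          + (g (Fin.last n).succ - g (Fin.last n).castSucc)
        = ∑ i : Fin n, (g i.succ.castSucc - g i.castSucc.castSucc)
          + (g (Fin.last (n+1)) - g (Fin.last n).castSucc) := by
          congr 1
      _ = (g (Fin.last n).castSucc - g 0) + (g (Fin.last (n+1)) - g (Fin.last n).castSucc) := by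
          rw [h]; rfl
      _ = g (Fin.last (n+1)) - g 0 := by abel

/-- The bracket `[u,v] = u₀v₁ - v₀u₁`. -/
def bracket {k : Type*} [CommRing k] (u v : Fin 2 → k) : k := u 0 * v 1 - v 0 * u 1

/-- Telescoping bracket identity: if `α = δ₀, δ₁, …, δ_m = β` and `γ` are vectors in `k²`
with `[γ, δᵢ] ≠ 0` for all `i`, then
`[α,β] = Σ_{i=0}^{m-1} [γ,α][γ,β][δᵢ,δ_{i+1}] / ([γ,δᵢ][γ,δ_{i+1}])`. -/
theorem bracket_telescope {k : Type*} [Field k] (m : ℕ) (δ : Fin (m + 1) → Fin 2 → k)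
    (γ : Fin 2 → k) (hnz : ∀ i, bracket γ (δ i) ≠ 0) :
    bracket (δ 0) (δ (Fin.last m)) =
      ∑ i : Fin m,
        bracket γ (δ 0) * bracket γ (δ (Fin.last m)) * bracket (δ i.castSucc) (δ i.succ) /
          (bracket γ (δ i.castSucc) * bracket γ (δ i.succ)) := by
  set g : Fin (m + 1) → k :=
    fun j => bracket γ (δ 0) * bracket (δ (Fin.last m)) (δ j) / bracket γ (δ j) with hg
  have key : ∀ i : Fin m,
      bracket γ (δ 0) * bracket γ (δ (Fin.last m)) * bracket (δ i.castSucc) (δ i.succ) /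
          (bracket γ (δ i.castSucc) * bracket γ (δ i.succ))
        = g i.succ - g i.castSucc := by
    intro i
    have h1 := hnz i.castSucc
    have h2 := hnz i.succ
    simp only [hg, bracket] at *
    rw [div_sub_div _ _ h2 h1, div_eq_div_iff (mul_ne_zero h1 h2) (mul_ne_zero h2 h1)]
    ring
  rw [Finset.sum_congr rfl fun i _ => key i, fin_sum_telescope m g]
  have h0 := hnz 0
  have hl := hnz (Fin.last m)
  simp only [hg, bracket] at *
  rw [sub_self, mul_zero, zero_div, zero_sub, mul_div_cancel_left₀ _ h0]
  ring
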